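/- For every w ∈ W, the element w is the unique element of minimal length in the set {u ∈ W : u·e_w is dominant}. In particular, the map W → X sending v to the Steinberg weight e_v is injective. -/

import Mathlib

open scoped InnerProductSpace Classical

noncomputable section

/-- A reduced crystallographic root system `Φ` spanning a finite-dimensional real inner
product space `V`, together with a choice of simple roots `π` (determining the positive
system), the corresponding fundamental weights `ω`, the reflections `s`, the Weyl group
`W` and the weight lattice `X`. -/
structure RootSystemData (V : Type) [NormedAddCommGroup V] [InnerProductSpace ℝ V]
    [FiniteDimensional ℝ V] where
  /-- the (finite) set of roots -/
  Φ : Finset V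
  /-- the rank -/
  r : ℕ
  /-- the simple roots `α₁, …, α_r` -/
  π : Fin r → V
  /-- the fundamental weights `ω₁, …, ω_r` -/
  ω : Fin r → V
  /-- the orthogonal reflection attached to a root -/
  s : V → (V ≃ₗ[ℝ] V)
  /-- the Weyl group -/
  W : Subgroup (V ≃ₗ[ℝ] V)
  /-- the weight lattice -/
  X : AddSubgroup V
  root_ne_zero : ∀ α ∈ Φ, α ≠ (0 : V)
  root_span : Submodule.span ℝ (Φ : Set V) = ⊤
  reduced : ∀ α ∈ Φ, ∀ c : ℝ, c • α ∈ Φ → c = 1 ∨ c = -1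
  crystallographic : ∀ α ∈ Φ, ∀ β ∈ Φ, ∃ n : ℤ, 2 * ⟪β, α⟫_ℝ / ⟪α, α⟫_ℝ = (n : ℝ)
  s_apply : ∀ α ∈ Φ, ∀ v : V, s α v = v - (2 * ⟪v, α⟫_ℝ / ⟪α, α⟫_ℝ) • α
  refl_stable : ∀ α ∈ Φ, ∀ β ∈ Φ, s α β ∈ Φ
  W_eq : W = Subgroup.closure {g : V ≃ₗ[ℝ] V | ∃ α ∈ Φ, g = s α}
  inner_invariant : ∀ g ∈ W, ∀ u v : V, ⟪g u, g v⟫_ℝ = ⟪u, v⟫_ℝ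
  simple_mem : ∀ i, π i ∈ Φ
  simple_indep : LinearIndependent ℝ π
  pos_or_neg : ∀ α ∈ Φ,
      (∃ c : Fin r → ℝ, (∀ i, 0 ≤ c i) ∧ α = ∑ i, c i • π i) ∨
      (∃ c : Fin r → ℝ, (∀ i, 0 ≤ c i) ∧ -α = ∑ i, c i • π i)
  fund : ∀ i j, 2 * ⟪ω i, π j⟫_ℝ / ⟪π j, π j⟫_ℝ = if i = j then (1 : ℝ) else 0
  X_eq : X = AddSubgroup.closure (Set.range ω)
  X_stable : ∀ g ∈ W, ∀ x ∈ X, g x ∈ X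

/-- The pairing `(v, α∨) = 2(v,α)/(α,α)` of a vector with the coroot of `α`. -/
def pairing {V : Type} [NormedAddCommGroup V] [InnerProductSpace ℝ V]
    (v α : V) : ℝ := 2 * ⟪v, α⟫_ℝ / ⟪α, α⟫_ℝ

namespace RootSystemData

variable {V : Type} [NormedAddCommGroup V] [InnerProductSpace ℝ V] [FiniteDimensional ℝ V]
variable (C : RootSystemData V)

/-- `α` is a nonnegative combination of the simple roots (a positive root, if `α ∈ Φ`). -/
def IsPos (α : V) : Prop := ∃ c : Fin C.r → ℝ, (∀ i, 0 ≤ c i) ∧ α = ∑ i, c i • C.π i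

/-- `α` is a nonpositive combination of the simple roots (a negative root, if `α ∈ Φ`). -/
def IsNeg (α : V) : Prop := C.IsPos (-α)

/-- A weight is dominant if it pairs nonnegatively with all simple coroots. -/
def IsDominant (lam : V) : Prop := ∀ i, 0 ≤ pairing lam (C.π i)

/-- The product of the simple reflections along a word. -/
def wordProd (l : List (Fin C.r)) : V ≃ₗ[ℝ] V := (l.map fun i => C.s (C.π i)).prod

/-- The length of `w`: the least length of an expression of `w` as a product of
simple reflections. -/
def length (w : V ≃ₗ[ℝ] V) : ℕ :=
  sInf {n | ∃ l : List (Fin C.r), l.length = n ∧ C.wordProd l = w}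

/-- The (strong) Bruhat order on the Weyl group: `u ≤ v` iff `v` is obtained from `u`
by successively multiplying by reflections, increasing the length at each step. -/
def BruhatLE (u v : V ≃ₗ[ℝ] V) : Prop :=
  Relation.ReflTransGen
    (fun a b => (∃ α ∈ C.Φ, b = a * C.s α) ∧ C.length a < C.length b) u v

/-- The Steinberg weight `e_v = v⁻¹ ⬝ ∑_{i : v⁻¹ α_i < 0} ω_i`. -/
def steinberg (v : V ≃ₗ[ℝ] V) : V :=
  v⁻¹ (∑ i ∈ Finset.univ.filter (fun i => C.IsNeg (v⁻¹ (C.π i))), C.ω i)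

/-- The excellent order on weights: `λ ≤ₑ μ` iff `(λ,λ) < (μ,μ)`, or `λ = wν`, `μ = zν`
for some dominant `ν ∈ X` and `w ≤ z` in the Bruhat order. -/
def ExcLE (lam mu : V) : Prop :=
  ⟪lam, lam⟫_ℝ < ⟪mu, mu⟫_ℝ ∨
    ∃ nu ∈ C.X, C.IsDominant nu ∧
      ∃ w ∈ C.W, ∃ z ∈ C.W, C.BruhatLE w z ∧ lam = w nu ∧ mu = z nu

/-- The strict excellent order. -/
def ExcLT (lam mu : V) : Prop := C.ExcLE lam mu ∧ lam ≠ mu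

/-- The antipodal excellent order: `λ ≤ₐ μ` iff `-λ ≤ₑ -μ`. -/
def AntiLE (lam mu : V) : Prop := C.ExcLE (-lam) (-mu)

/-- The strict antipodal excellent order. -/
def AntiLT (lam mu : V) : Prop := C.AntiLE lam mu ∧ lam ≠ mu

/-- The dominance order: `μ ≤_d ν` iff `ν - μ` is a nonnegative integer combination of
the positive roots. -/
def DomLE (mu nu : V) : Prop :=
  ∃ c : V → ℕ, nu - mu = ∑ α ∈ C.Φ.filter (fun a => C.IsPos a), (c α : ℝ) • α

theorem omega_mem (i : Fin C.r) : C.ω i ∈ C.X := by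
  rw [C.X_eq]; exact AddSubgroup.subset_closure ⟨i, rfl⟩

theorem steinberg_mem {v : V ≃ₗ[ℝ] V} (hv : v ∈ C.W) : C.steinberg v ∈ C.X :=
  C.X_stable _ (inv_mem hv) _ (AddSubgroup.sum_mem _ fun i _ => C.omega_mem i)

/-- The group ring `ℤ[X]` of the weight lattice. -/
abbrev GroupRing := AddMonoidAlgebra ℤ ↥C.X

/-- The basis element `e^λ` of `ℤ[X]`. -/
def expo (x : V) (hx : x ∈ C.X) : C.GroupRing := AddMonoidAlgebra.single ⟨x, hx⟩ 1

/-- `e^λ`, defined for all `λ : V` (and zero off the lattice). -/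
def expoOf (x : V) : C.GroupRing := if hx : x ∈ C.X then C.expo x hx else 0

/-- The coefficient of `e^x` in an element of `ℤ[X]`. -/
def coeff (m : C.GroupRing) (x : ↥C.X) : ℤ := (AddMonoidAlgebra.coeff m : ↥C.X →₀ ℤ) x

/-- The support of an element of `ℤ[X]`. -/
def supp (m : C.GroupRing) : Finset ↥C.X := (AddMonoidAlgebra.coeff m : ↥C.X →₀ ℤ).support

/-- The action of `g ∈ W` on the weight lattice. -/
def actX (g : V ≃ₗ[ℝ] V) (hg : g ∈ C.W) : ↥C.X → ↥C.X :=
  fun x => ⟨g x, C.X_stable g hg x.1 x.2⟩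

/-- The action of `g ∈ W` on `ℤ[X]`, with `e^λ ↦ e^{gλ}`. -/
def wAct (g : V ≃ₗ[ℝ] V) (hg : g ∈ C.W) (m : C.GroupRing) : C.GroupRing :=
  AddMonoidAlgebra.ofCoeff (Finsupp.mapDomain (C.actX g hg) (AddMonoidAlgebra.coeff m))

/-- `m` lies in the invariant subring `ℤ[X]^W`. -/
def IsWInvariant (m : C.GroupRing) : Prop := ∀ g (hg : g ∈ C.W), C.wAct g hg m = m

/-- The parabolic subgroup `W_{Π'}` generated by the simple reflections `s_α, α ∈ Π'`,
for a subset `Π'` of the simple roots (given by a subset `J` of the index set). -/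
def parabolicSubgroup (J : Set (Fin C.r)) : Subgroup (V ≃ₗ[ℝ] V) :=
  Subgroup.closure {g | ∃ i ∈ J, g = C.s (C.π i)}

theorem parabolic_le (J : Set (Fin C.r)) : C.parabolicSubgroup J ≤ C.W := by
  refine (Subgroup.closure_le _).2 ?_
  rintro g ⟨i, _, rfl⟩
  rw [C.W_eq]
  exact Subgroup.subset_closure ⟨C.π i, C.simple_mem i, rfl⟩

/-- `m` lies in the invariant subring `ℤ[X]^H` for a subgroup `H ≤ W`. -/
def IsInvariantUnder (H : Subgroup (V ≃ₗ[ℝ] V)) (hH : H ≤ C.W) (m : C.GroupRing) : Prop :=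
  ∀ g (hg : g ∈ H), C.wAct g (hH hg) m = m

/-- `v` is of minimal length in its coset `v ⬝ W_{Π'}`. -/
def IsMinCosetRep (J : Set (Fin C.r)) (v : V ≃ₗ[ℝ] V) : Prop :=
  v ∈ C.W ∧ ∀ z ∈ C.parabolicSubgroup J, C.length v ≤ C.length (v * z)

/-- The subgroup generated by the simple reflections fixing a given vector. -/
def fixSubgroup (x : V) : Subgroup (V ≃ₗ[ℝ] V) :=
  Subgroup.closure {g | ∃ i : Fin C.r, C.s (C.π i) x = x ∧ g = C.s (C.π i)}

end RootSystemData


namespace RootSystemData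

variable {V : Type} [NormedAddCommGroup V] [InnerProductSpace ℝ V] [FiniteDimensional ℝ V]
variable (C : RootSystemData V)

theorem inner_self_pos' {α : V} (h : α ∈ C.Φ) : 0 < ⟪α, α⟫_ℝ :=
  lt_of_le_of_ne real_inner_self_nonneg
    (fun h' => C.root_ne_zero α h (inner_self_eq_zero.1 h'.symm))

theorem isPos_or_isNeg {α : V} (h : α ∈ C.Φ) : C.IsPos α ∨ C.IsNeg α := C.pos_or_neg α h

theorem span_simple : Submodule.span ℝ (Set.range C.π) = ⊤ := by
  rw [eq_top_iff, ← C.root_span, Submodule.span_le]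
  intro α hα
  have key : ∀ c : Fin C.r → ℝ, (∑ i, c i • C.π i) ∈ Submodule.span ℝ (Set.range C.π) :=
    fun c => Submodule.sum_mem _ fun i _ =>
      Submodule.smul_mem _ _ (Submodule.subset_span ⟨i, rfl⟩)
  rcases C.pos_or_neg α hα with ⟨c, _, hc⟩ | ⟨c, _, hc⟩
  · rw [hc]; exact key c
  · have : α = -∑ i, c i • C.π i := by rw [← hc, neg_neg]
    rw [this]; exact Submodule.neg_mem _ (key c)

/-- The simple roots as a basis. -/
def B : Module.Basis (Fin C.r) ℝ V := Module.Basis.mk C.simple_indep (C.span_simple).ge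

theorem B_eq (i : Fin C.r) : C.B i = C.π i := Module.Basis.mk_apply _ _ i

theorem repr_sum (c : Fin C.r → ℝ) (j : Fin C.r) :
    C.B.repr (∑ i, c i • C.π i) j = c j := by
  simp_rw [← C.B_eq]
  rw [C.B.repr_sum_self]

theorem isPos_iff (α : V) : C.IsPos α ↔ ∀ j, 0 ≤ C.B.repr α j := by
  constructor
  · rintro ⟨c, hc, rfl⟩ j; rw [C.repr_sum]; exact hc j
  · intro h
    refine ⟨fun i => C.B.repr α i, h, ?_⟩
    simp_rw [← C.B_eq]
    exact (C.B.sum_repr α).symm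

theorem isNeg_iff (α : V) : C.IsNeg α ↔ ∀ j, C.B.repr α j ≤ 0 := by
  rw [IsNeg, C.isPos_iff]
  simp [neg_nonneg]

theorem isPos_zero : C.IsPos (0 : V) := by
  rw [C.isPos_iff]; simp

theorem eq_zero_of_pos_neg {α : V} (h1 : C.IsPos α) (h2 : C.IsNeg α) : α = 0 := by
  rw [C.isPos_iff] at h1; rw [C.isNeg_iff] at h2
  have h3 : C.B.repr α = 0 := by
    ext j; exact le_antisymm (h2 j) (h1 j)
  simpa using C.B.repr.map_eq_zero_iff.1 h3

theorem not_isNeg_of_pos {α : V} (hα : α ∈ C.Φ) (h : C.IsPos α) : ¬ C.IsNeg α :=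
  fun h2 => C.root_ne_zero α hα (C.eq_zero_of_pos_neg h h2)

theorem isNeg_of_not_pos {α : V} (hα : α ∈ C.Φ) (h : ¬ C.IsPos α) : C.IsNeg α :=
  (C.isPos_or_isNeg hα).resolve_left h

theorem isPos_simple (i : Fin C.r) : C.IsPos (C.π i) := by
  rw [C.isPos_iff]
  intro j
  rw [← C.B_eq, C.B.repr_self]
  simp [Finsupp.single_apply]
  split <;> norm_num

theorem isNeg_neg_iff (α : V) : C.IsNeg (-α) ↔ C.IsPos α := by
  rw [IsNeg, neg_neg]

end RootSystemData

namespace RootSystemData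

variable {V : Type} [NormedAddCommGroup V] [InnerProductSpace ℝ V] [FiniteDimensional ℝ V]
variable (C : RootSystemData V)

theorem s_self {α : V} (h : α ∈ C.Φ) : C.s α α = -α := by
  rw [C.s_apply α h α]
  have h0 : ⟪α, α⟫_ℝ ≠ 0 := ne_of_gt (C.inner_self_pos' h)
  rw [mul_div_assoc, div_self h0, mul_one, two_smul]
  abel

theorem neg_root_mem {α : V} (h : α ∈ C.Φ) : -α ∈ C.Φ := by
  rw [← C.s_self h]; exact C.refl_stable α h α h

theorem s_neg {α : V} (h : α ∈ C.Φ) : C.s (-α) = C.s α := by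
  ext v
  rw [C.s_apply (-α) (C.neg_root_mem h) v, C.s_apply α h v]
  rw [inner_neg_right, inner_neg_neg, mul_neg, neg_div, neg_smul, smul_neg, neg_neg]

theorem s_invol {α : V} (h : α ∈ C.Φ) (v : V) : C.s α (C.s α v) = v := by
  rw [C.s_apply α h v, C.s_apply α h, inner_sub_left, real_inner_smul_left]
  have h0 : ⟪α, α⟫_ℝ ≠ 0 := ne_of_gt (C.inner_self_pos' h)
  match_scalars
  · rfl
  · field_simp
    ring

theorem s_sq {α : V} (h : α ∈ C.Φ) : C.s α * C.s α = 1 := by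
  ext v; exact C.s_invol h v

theorem s_inv {α : V} (h : α ∈ C.Φ) : (C.s α)⁻¹ = C.s α :=
  inv_eq_of_mul_eq_one_right (C.s_sq h)

theorem s_mem_W {α : V} (h : α ∈ C.Φ) : C.s α ∈ C.W := by
  rw [C.W_eq]; exact Subgroup.subset_closure ⟨α, h, rfl⟩

theorem root_map {g : V ≃ₗ[ℝ] V} (hg : g ∈ C.W) {α : V} (hα : α ∈ C.Φ) : g α ∈ C.Φ := by
  rw [C.W_eq] at hg
  induction hg using Subgroup.closure_induction generalizing α with
  | mem x hx =>
      obtain ⟨β, hβ, rfl⟩ := hx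
      exact C.refl_stable β hβ α hα
  | one => exact hα
  | mul x y hx hy ihx ihy => exact ihx (ihy hα)
  | inv x hx ih =>
      have himg : C.Φ.image x = C.Φ := by
        apply Finset.eq_of_subset_of_card_le
        · intro β hβ
          obtain ⟨γ, hγ, rfl⟩ := Finset.mem_image.1 hβ
          exact ih hγ
        · rw [Finset.card_image_of_injective _ x.injective]
      obtain ⟨γ, hγ, hγx⟩ := Finset.mem_image.1 (himg.symm ▸ hα)
      have : x⁻¹ (x γ) = γ := x.symm_apply_apply γ
      rw [hγx] at this
      rw [this]; exact hγ

theorem apply_inv_apply (g : V ≃ₗ[ℝ] V) (v : V) : g (g⁻¹ v) = v := g.apply_symm_apply v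

theorem inv_apply_apply (g : V ≃ₗ[ℝ] V) (v : V) : g⁻¹ (g v) = v := g.symm_apply_apply v

theorem inner_inv {g : V ≃ₗ[ℝ] V} (hg : g ∈ C.W) (u v : V) : ⟪g u, v⟫_ℝ = ⟪u, g⁻¹ v⟫_ℝ := by
  conv_rhs => rw [← C.inner_invariant g hg u (g⁻¹ v)]
  rw [apply_inv_apply]

theorem conj_s {g : V ≃ₗ[ℝ] V} (hg : g ∈ C.W) {α : V} (hα : α ∈ C.Φ) :
    g * C.s α * g⁻¹ = C.s (g α) := by
  ext v
  have h1 : (g * C.s α * g⁻¹) v = g (C.s α (g⁻¹ v)) := rfl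
  rw [h1, C.s_apply α hα (g⁻¹ v), map_sub, map_smul, apply_inv_apply,
    C.s_apply (g α) (C.root_map hg hα) v]
  have e1 : ⟪g⁻¹ v, α⟫_ℝ = ⟪v, g α⟫_ℝ := by
    rw [← C.inner_invariant g hg (g⁻¹ v) α, apply_inv_apply]
  have e2 : ⟪α, α⟫_ℝ = ⟪g α, g α⟫_ℝ := (C.inner_invariant g hg α α).symm
  rw [e1, e2]

end RootSystemData

namespace RootSystemData

variable {V : Type} [NormedAddCommGroup V] [InnerProductSpace ℝ V] [FiniteDimensional ℝ V]
variable (C : RootSystemData V)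

/-- A simple reflection permutes the positive roots other than its own simple root. -/
theorem s_simple_pos {i : Fin C.r} {α : V} (hα : α ∈ C.Φ) (hpos : C.IsPos α)
    (hne : α ≠ C.π i) : C.IsPos (C.s (C.π i) α) ∧ C.s (C.π i) α ∈ C.Φ := by
  have hπ := C.simple_mem i
  have hsΦ : C.s (C.π i) α ∈ C.Φ := C.refl_stable _ hπ _ hα
  refine ⟨?_, hsΦ⟩
  -- find j ≠ i with positive coefficient
  have hrepr := (C.isPos_iff α).1 hpos
  have hj : ∃ j, j ≠ i ∧ 0 < C.B.repr α j := by
    by_contra hcon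
    push_neg at hcon
    have hzero : ∀ j, j ≠ i → C.B.repr α j = 0 :=
      fun j hji => le_antisymm (hcon j hji) (hrepr j)
    have hαi : α = C.B.repr α i • C.π i := by
      rw [← C.B_eq]
      conv_lhs => rw [← C.B.sum_repr α]
      rw [Finset.sum_eq_single i]
      · intro j _ hji; rw [hzero j hji, zero_smul]
      · intro h; exact absurd (Finset.mem_univ i) h
    have hc := C.reduced (C.π i) hπ (C.B.repr α i) (by rw [← hαi]; exact hα)
    rcases hc with hc | hc
    · rw [hc, one_smul] at hαi; exact hne hαi
    · have := hrepr i; rw [hc] at this; linarith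
  obtain ⟨j, hji, hjpos⟩ := hj
  have hform : C.s (C.π i) α = α - (2 * ⟪α, C.π i⟫_ℝ / ⟪C.π i, C.π i⟫_ℝ) • C.π i :=
    C.s_apply _ hπ α
  have hreprj : C.B.repr (C.s (C.π i) α) j = C.B.repr α j := by
    rw [hform, map_sub, map_smul]
    have : C.B.repr (C.π i) j = 0 := by
      rw [← C.B_eq, C.B.repr_self, Finsupp.single_apply, if_neg (fun h => hji h.symm)]
    simp [this]
  rcases C.isPos_or_isNeg hsΦ with h | h
  · exact h
  · exfalso
    have := (C.isNeg_iff _).1 h j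
    rw [hreprj] at this
    linarith

/-- The subgroup generated by simple reflections. -/
def W0 : Subgroup (V ≃ₗ[ℝ] V) := Subgroup.closure {g | ∃ i, g = C.s (C.π i)}

theorem W0_le_W : C.W0 ≤ C.W := by
  refine (Subgroup.closure_le _).2 ?_
  rintro g ⟨i, rfl⟩
  exact C.s_mem_W (C.simple_mem i)

theorem s_simple_mem_W0 (i : Fin C.r) : C.s (C.π i) ∈ C.W0 :=
  Subgroup.subset_closure ⟨i, rfl⟩

/-- height of a vector: sum of its coordinates in the simple basis -/
def ht (α : V) : ℝ := ∑ j, C.B.repr α j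

theorem ht_simple (i : Fin C.r) : C.ht (C.π i) = 1 := by
  unfold ht
  simp_rw [← C.B_eq, C.B.repr_self]
  rw [Finset.sum_eq_single i]
  · simp
  · intro j _ hji; rw [Finsupp.single_apply, if_neg (fun h => hji h.symm)]
  · intro h; exact absurd (Finset.mem_univ i) h

theorem exists_pos_inner {α : V} (hα : α ∈ C.Φ) (hpos : C.IsPos α) :
    ∃ i, 0 < ⟪α, C.π i⟫_ℝ := by
  by_contra hcon
  push_neg at hcon
  have h1 : (0:ℝ) < ⟪α, α⟫_ℝ := C.inner_self_pos' hα
  have h2 : α = ∑ j, C.B.repr α j • C.π j := by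
    simp_rw [← C.B_eq]; exact (C.B.sum_repr α).symm
  have h3 : ⟪α, α⟫_ℝ = ∑ j, C.B.repr α j * ⟪α, C.π j⟫_ℝ := by
    nth_rewrite 2 [h2]
    rw [inner_sum]
    exact Finset.sum_congr rfl fun j _ => real_inner_smul_right α (C.π j) _
  have h4 : ⟪α, α⟫_ℝ ≤ 0 := by
    rw [h3]
    apply Finset.sum_nonpos
    intro j _
    exact mul_nonpos_of_nonneg_of_nonpos ((C.isPos_iff α).1 hpos j) (hcon j)
  linarith

theorem s_mem_W0_of_pos (n : ℕ) : ∀ α, α ∈ C.Φ → C.IsPos α →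
    (C.Φ.filter (fun β => C.ht β < C.ht α)).card < n → C.s α ∈ C.W0 := by
  induction n with
  | zero => intro α _ _ h; exact absurd h (Nat.not_lt_zero _)
  | succ n ih =>
    intro α hα hpos hcard
    by_cases hsimp : ∃ i, α = C.π i
    · obtain ⟨i, rfl⟩ := hsimp; exact C.s_simple_mem_W0 i
    · push_neg at hsimp
      obtain ⟨i, hip⟩ := C.exists_pos_inner hα hpos
      have hne : α ≠ C.π i := hsimp i
      set β := C.s (C.π i) α with hβ
      obtain ⟨hβpos, hβΦ⟩ := C.s_simple_pos hα hpos hne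
      have hπ := C.simple_mem i
      have hk : 0 < 2 * ⟪α, C.π i⟫_ℝ / ⟪C.π i, C.π i⟫_ℝ :=
        div_pos (by linarith) (C.inner_self_pos' hπ)
      have hht : C.ht β < C.ht α := by
        have hform : β = α - (2 * ⟪α, C.π i⟫_ℝ / ⟪C.π i, C.π i⟫_ℝ) • C.π i :=
          C.s_apply _ hπ α
        have : C.ht β = C.ht α - (2 * ⟪α, C.π i⟫_ℝ / ⟪C.π i, C.π i⟫_ℝ) * C.ht (C.π i) := by
          unfold ht
          rw [hform]
          rw [Finset.mul_sum, ← Finset.sum_sub_distrib]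
          congr 1; ext j
          rw [map_sub, map_smul]
          simp
        rw [this, C.ht_simple]
        linarith
      have hsub : (C.Φ.filter (fun γ => C.ht γ < C.ht β)) ⊂
          (C.Φ.filter (fun γ => C.ht γ < C.ht α)) := by
        constructor
        · intro γ hγ
          rw [Finset.mem_filter] at hγ ⊢
          exact ⟨hγ.1, lt_trans hγ.2 hht⟩
        · intro hsub'
          have : β ∈ C.Φ.filter (fun γ => C.ht γ < C.ht β) :=
            hsub' (Finset.mem_filter.2 ⟨hβΦ, hht⟩)
          rw [Finset.mem_filter] at this
          exact lt_irrefl _ this.2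
      have hcard' : (C.Φ.filter (fun γ => C.ht γ < C.ht β)).card < n := by
        have := Finset.card_lt_card hsub
        omega
      have hβW0 := ih β hβΦ hβpos hcard'
      have hconj : C.s (C.π i) * C.s β * (C.s (C.π i))⁻¹ = C.s (C.s (C.π i) β) :=
        C.conj_s (C.s_mem_W hπ) hβΦ
      have hββ : C.s (C.π i) β = α := C.s_invol hπ α
      rw [hββ] at hconj
      rw [← hconj]
      exact mul_mem (mul_mem (C.s_simple_mem_W0 i) hβW0)
        (by rw [C.s_inv hπ]; exact C.s_simple_mem_W0 i)

theorem s_mem_W0 {α : V} (hα : α ∈ C.Φ) : C.s α ∈ C.W0 := by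
  rcases C.isPos_or_isNeg hα with h | h
  · exact C.s_mem_W0_of_pos ((C.Φ.filter (fun β => C.ht β < C.ht α)).card + 1) α hα h
      (Nat.lt_succ_self _)
  · have hneg : -α ∈ C.Φ := C.neg_root_mem hα
    have : C.s α = C.s (-α) := by
      have := C.s_neg hα
      rw [this]
    rw [this]
    exact C.s_mem_W0_of_pos _ (-α) hneg h (Nat.lt_succ_self _)

theorem W_le_W0 : C.W ≤ C.W0 := by
  rw [C.W_eq]
  refine (Subgroup.closure_le _).2 ?_
  rintro g ⟨α, hα, rfl⟩
  exact C.s_mem_W0 hα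

end RootSystemData

namespace RootSystemData

variable {V : Type} [NormedAddCommGroup V] [InnerProductSpace ℝ V] [FiniteDimensional ℝ V]
variable (C : RootSystemData V)

theorem wordProd_nil : C.wordProd [] = 1 := rfl

theorem wordProd_cons (i : Fin C.r) (l : List (Fin C.r)) :
    C.wordProd (i :: l) = C.s (C.π i) * C.wordProd l := by
  unfold wordProd
  rw [List.map_cons, List.prod_cons]

theorem wordProd_append (l l' : List (Fin C.r)) :
    C.wordProd (l ++ l') = C.wordProd l * C.wordProd l' := by
  unfold wordProd
  rw [List.map_append, List.prod_append]

theorem wordProd_singleton (i : Fin C.r) : C.wordProd [i] = C.s (C.π i) := by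
  rw [C.wordProd_cons, wordProd_nil, mul_one]

theorem wordProd_mem_W (l : List (Fin C.r)) : C.wordProd l ∈ C.W := by
  induction l with
  | nil => exact one_mem _
  | cons i t ih => rw [C.wordProd_cons]; exact mul_mem (C.s_mem_W (C.simple_mem i)) ih

theorem wordProd_reverse (l : List (Fin C.r)) :
    C.wordProd l.reverse = (C.wordProd l)⁻¹ := by
  induction l with
  | nil => rw [List.reverse_nil, wordProd_nil, inv_one]
  | cons i t ih =>
      rw [List.reverse_cons, C.wordProd_append, ih, C.wordProd_singleton, C.wordProd_cons,
        mul_inv_rev, C.s_inv (C.simple_mem i)]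

theorem exists_word {g : V ≃ₗ[ℝ] V} (hg : g ∈ C.W) : ∃ l, C.wordProd l = g := by
  have hg0 : g ∈ C.W0 := C.W_le_W0 hg
  induction hg0 using Subgroup.closure_induction with
  | mem x hx => obtain ⟨i, rfl⟩ := hx; exact ⟨[i], C.wordProd_singleton i⟩
  | one => exact ⟨[], rfl⟩
  | mul x y hx hy ihx ihy =>
      obtain ⟨l, rfl⟩ := ihx (C.W0_le_W hx)
      obtain ⟨l', rfl⟩ := ihy (C.W0_le_W hy)
      exact ⟨l ++ l', C.wordProd_append l l'⟩
  | inv x hx ih =>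
      obtain ⟨l, rfl⟩ := ih (C.W0_le_W hx)
      exact ⟨l.reverse, C.wordProd_reverse l⟩

theorem length_le (l : List (Fin C.r)) : C.length (C.wordProd l) ≤ l.length :=
  Nat.sInf_le ⟨l, rfl, rfl⟩

theorem exists_reduced {g : V ≃ₗ[ℝ] V} (hg : g ∈ C.W) :
    ∃ l : List (Fin C.r), l.length = C.length g ∧ C.wordProd l = g := by
  obtain ⟨l, hl⟩ := C.exists_word hg
  have hne : {n | ∃ l : List (Fin C.r), l.length = n ∧ C.wordProd l = g}.Nonempty :=
    ⟨l.length, l, rfl, hl⟩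
  exact Nat.sInf_mem hne

theorem length_one : C.length (1 : V ≃ₗ[ℝ] V) = 0 :=
  Nat.le_zero.1 (Nat.sInf_le ⟨[], rfl, rfl⟩)

theorem eq_one_of_length_eq_zero {g : V ≃ₗ[ℝ] V} (hg : g ∈ C.W)
    (h : C.length g = 0) : g = 1 := by
  obtain ⟨l, hl, hw⟩ := C.exists_reduced hg
  rw [h, List.length_eq_zero_iff] at hl
  rw [hl] at hw
  exact hw.symm

/-- The exchange condition. -/
theorem exchange (l : List (Fin C.r)) (i : Fin C.r)
    (h : C.IsNeg (C.wordProd l (C.π i))) :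
    ∃ l' : List (Fin C.r), l'.length + 1 = l.length ∧
      C.wordProd l' = C.wordProd l * C.s (C.π i) := by
  induction l with
  | nil =>
      exfalso
      rw [wordProd_nil] at h
      exact C.not_isNeg_of_pos (C.simple_mem i) (C.isPos_simple i) h
  | cons b t ih =>
      rw [C.wordProd_cons] at h
      by_cases hneg : C.IsNeg (C.wordProd t (C.π i))
      · obtain ⟨t', ht', hw⟩ := ih hneg
        refine ⟨b :: t', by simp [ht'], ?_⟩
        rw [C.wordProd_cons, hw, C.wordProd_cons, mul_assoc]
      · have htΦ : C.wordProd t (C.π i) ∈ C.Φ :=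
          C.root_map (C.wordProd_mem_W t) (C.simple_mem i)
        have hpos : C.IsPos (C.wordProd t (C.π i)) := (C.isPos_or_isNeg htΦ).resolve_right hneg
        have heq : C.wordProd t (C.π i) = C.π b := by
          by_contra hne
          have := C.s_simple_pos htΦ hpos hne
          have h2 : (C.s (C.π b)) (C.wordProd t (C.π i)) ∈ C.Φ := this.2
          exact C.not_isNeg_of_pos h2 this.1 h
        have hconj : C.wordProd t * C.s (C.π i) * (C.wordProd t)⁻¹ = C.s (C.π b) := by
          rw [C.conj_s (C.wordProd_mem_W t) (C.simple_mem i), heq]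
        refine ⟨t, by simp, ?_⟩
        rw [C.wordProd_cons, ← hconj]
        have hs := C.s_sq (C.simple_mem i)
        calc C.wordProd t
            = C.wordProd t * (C.s (C.π i) * C.s (C.π i)) := by rw [hs, mul_one]
          _ = C.wordProd t * C.s (C.π i) * (C.wordProd t)⁻¹ * (C.wordProd t * C.s (C.π i)) := by
              group

theorem length_lt_of_neg {w : V ≃ₗ[ℝ] V} (hw : w ∈ C.W) {i : Fin C.r}
    (h : C.IsNeg (w (C.π i))) : C.length (w * C.s (C.π i)) < C.length w := by
  obtain ⟨l, hl, hw'⟩ := C.exists_reduced hw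
  rw [← hw'] at h
  obtain ⟨l', hl', hwl'⟩ := C.exchange l i h
  rw [hw'] at hwl'
  calc C.length (w * C.s (C.π i)) ≤ l'.length := by rw [← hwl']; exact C.length_le l'
    _ < l.length := by omega
    _ = C.length w := hl

theorem length_lt_of_pos {w : V ≃ₗ[ℝ] V} (hw : w ∈ C.W) {i : Fin C.r}
    (h : C.IsPos (w (C.π i))) : C.length w < C.length (w * C.s (C.π i)) := by
  have hπ := C.simple_mem i
  have hws : w * C.s (C.π i) ∈ C.W := mul_mem hw (C.s_mem_W hπ)
  have hneg : C.IsNeg ((w * C.s (C.π i)) (C.π i)) := by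
    have : (w * C.s (C.π i)) (C.π i) = w (C.s (C.π i) (C.π i)) := rfl
    rw [this, C.s_self hπ, map_neg]
    rw [isNeg_neg_iff]
    exact h
  have := C.length_lt_of_neg hws hneg
  rwa [mul_assoc, C.s_sq hπ, mul_one] at this

theorem exists_neg_simple {w : V ≃ₗ[ℝ] V} (hw : w ∈ C.W) (hne : w ≠ 1) :
    ∃ i, C.IsNeg (w (C.π i)) := by
  obtain ⟨l, hl, hwl⟩ := C.exists_reduced hw
  have hlne : l ≠ [] := by
    intro h
    rw [h, wordProd_nil] at hwl
    exact hne hwl.symm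
  obtain ⟨t, i, rfl⟩ := (List.eq_nil_or_concat' l).resolve_left hlne
  refine ⟨i, ?_⟩
  have hΦ : w (C.π i) ∈ C.Φ := C.root_map hw (C.simple_mem i)
  by_contra hcon
  have hpos : C.IsPos (w (C.π i)) := (C.isPos_or_isNeg hΦ).resolve_right hcon
  have h1 := C.length_lt_of_pos hw hpos
  have h2 : w * C.s (C.π i) = C.wordProd t := by
    rw [← hwl, C.wordProd_append, C.wordProd_singleton, mul_assoc,
      C.s_sq (C.simple_mem i), mul_one]
  rw [h2] at h1
  have h3 : C.length (C.wordProd t) ≤ t.length := C.length_le t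
  have h4 : (t ++ [i]).length = t.length + 1 := by simp
  omega

end RootSystemData

namespace RootSystemData

variable {V : Type} [NormedAddCommGroup V] [InnerProductSpace ℝ V] [FiniteDimensional ℝ V]
variable (C : RootSystemData V)

/-- The inversion set of `w`. -/
def invSet (w : V ≃ₗ[ℝ] V) : Finset V :=
  C.Φ.filter (fun α => C.IsPos α ∧ C.IsNeg (w α))

theorem mem_invSet {w : V ≃ₗ[ℝ] V} {α : V} :
    α ∈ C.invSet w ↔ α ∈ C.Φ ∧ C.IsPos α ∧ C.IsNeg (w α) := by
  unfold invSet; rw [Finset.mem_filter]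

theorem invSet_one : C.invSet (1 : V ≃ₗ[ℝ] V) = ∅ := by
  ext α
  rw [C.mem_invSet]
  simp only [Finset.notMem_empty, iff_false]
  rintro ⟨hΦ, hpos, hneg⟩
  exact C.not_isNeg_of_pos hΦ hpos hneg

theorem mem_invSet_self {w : V ≃ₗ[ℝ] V} {i : Fin C.r} (h : C.IsNeg (w (C.π i))) :
    C.π i ∈ C.invSet w :=
  C.mem_invSet.2 ⟨C.simple_mem i, C.isPos_simple i, h⟩

theorem card_invSet_mul_s {w : V ≃ₗ[ℝ] V} (hw : w ∈ C.W) {i : Fin C.r}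
    (h : C.IsNeg (w (C.π i))) :
    (C.invSet (w * C.s (C.π i))).card + 1 = (C.invSet w).card := by
  have hπ := C.simple_mem i
  have hwπΦ : w (C.π i) ∈ C.Φ := C.root_map hw hπ
  have key : (C.invSet (w * C.s (C.π i))).card = ((C.invSet w).erase (C.π i)).card := by
    apply Finset.card_nbij' (C.s (C.π i)) (C.s (C.π i))
    · intro a ha
      rw [Finset.mem_coe, C.mem_invSet] at ha
      obtain ⟨haΦ, hapos, haneg⟩ := ha
      have hane : a ≠ C.π i := by
        intro hcon
        have hx : (w * C.s (C.π i)) a = w (-(C.π i)) := by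
          show w ((C.s (C.π i)) a) = _
          rw [hcon, C.s_self hπ]
        rw [hx, map_neg, isNeg_neg_iff] at haneg
        exact C.not_isNeg_of_pos hwπΦ haneg h
      obtain ⟨hspos, hsΦ⟩ := C.s_simple_pos haΦ hapos hane
      rw [Finset.mem_coe, Finset.mem_erase, C.mem_invSet]
      refine ⟨?_, hsΦ, hspos, ?_⟩
      · intro hcon
        have ha' : a = -C.π i := by
          have h2 := congrArg (C.s (C.π i)) hcon
          rw [C.s_invol hπ, C.s_self hπ] at h2
          exact h2
        rw [ha'] at hapos
        have hnegpi : C.IsNeg (C.π i) := hapos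
        exact C.not_isNeg_of_pos hπ (C.isPos_simple i) hnegpi
      · have : w (C.s (C.π i) a) = (w * C.s (C.π i)) a := rfl
        rw [this]; exact haneg
    · intro b hb
      rw [Finset.mem_coe, Finset.mem_erase, C.mem_invSet] at hb
      obtain ⟨hbne, hbΦ, hbpos, hbneg⟩ := hb
      obtain ⟨hspos, hsΦ⟩ := C.s_simple_pos hbΦ hbpos hbne
      rw [Finset.mem_coe, C.mem_invSet]
      refine ⟨hsΦ, hspos, ?_⟩
      have : (w * C.s (C.π i)) (C.s (C.π i) b) = w b := by
        show w (C.s (C.π i) (C.s (C.π i) b)) = w b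
        rw [C.s_invol hπ]
      rw [this]; exact hbneg
    · intro a _; exact C.s_invol hπ a
    · intro a _; exact C.s_invol hπ a
  rw [key]
  have hmem : C.π i ∈ C.invSet w := C.mem_invSet_self h
  rw [Finset.card_erase_of_mem hmem]
  have : 1 ≤ (C.invSet w).card := Finset.card_pos.2 ⟨_, hmem⟩
  omega

theorem length_mul_s_le {g : V ≃ₗ[ℝ] V} (hg : g ∈ C.W) (i : Fin C.r) :
    C.length (g * C.s (C.π i)) ≤ C.length g + 1 := by
  obtain ⟨l, hl, hwl⟩ := C.exists_reduced hg
  have := C.length_le (l ++ [i])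
  rw [C.wordProd_append, C.wordProd_singleton, hwl] at this
  simpa [hl] using this

theorem length_eq_card_invSet {w : V ≃ₗ[ℝ] V} (hw : w ∈ C.W) :
    C.length w = (C.invSet w).card := by
  generalize hn : C.length w = n
  induction n using Nat.strong_induction_on generalizing w with
  | _ n ih =>
    rcases Nat.eq_zero_or_pos n with h0 | hposn
    · subst h0
      have h1 : w = 1 := C.eq_one_of_length_eq_zero hw hn
      rw [h1, C.invSet_one, Finset.card_empty]
    · have hne : w ≠ 1 := by
        rintro rfl
        rw [C.length_one] at hn
        omega
      obtain ⟨i, hi⟩ := C.exists_neg_simple hw hne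
      have hπ := C.simple_mem i
      have hws : w * C.s (C.π i) ∈ C.W := mul_mem hw (C.s_mem_W hπ)
      have hlt : C.length (w * C.s (C.π i)) < C.length w := C.length_lt_of_neg hw hi
      have hge : C.length w ≤ C.length (w * C.s (C.π i)) + 1 := by
        have := C.length_mul_s_le hws i
        rwa [mul_assoc, C.s_sq hπ, mul_one] at this
      have heq : C.length (w * C.s (C.π i)) = n - 1 := by omega
      have hcard := C.card_invSet_mul_s hw hi
      have := ih (n - 1) (by omega) hws heq
      omega

end RootSystemData

namespace RootSystemData

variable {V : Type} [NormedAddCommGroup V] [InnerProductSpace ℝ V] [FiniteDimensional ℝ V]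
variable (C : RootSystemData V)

theorem inner_simple_nonneg_of_dominant {lam : V} (h : C.IsDominant lam) (i : Fin C.r) :
    0 ≤ ⟪lam, C.π i⟫_ℝ := by
  have h1 := h i
  unfold pairing at h1
  have hA : (0:ℝ) < ⟪C.π i, C.π i⟫_ℝ := C.inner_self_pos' (C.simple_mem i)
  nlinarith [mul_nonneg h1 hA.le, div_mul_cancel₀ (2 * ⟪lam, C.π i⟫_ℝ) hA.ne']

theorem inner_expand (lam γ : V) :
    ⟪lam, γ⟫_ℝ = ∑ j, C.B.repr γ j * ⟪lam, C.π j⟫_ℝ := by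
  have hexp : γ = ∑ j, C.B.repr γ j • C.π j := by
    simp_rw [← C.B_eq]; exact (C.B.sum_repr γ).symm
  nth_rewrite 1 [hexp]
  rw [inner_sum]
  exact Finset.sum_congr rfl fun j _ => real_inner_smul_right lam (C.π j) _

theorem inner_nonneg_of_dominant_pos {lam γ : V} (h : C.IsDominant lam)
    (hγ : C.IsPos γ) : 0 ≤ ⟪lam, γ⟫_ℝ := by
  rw [C.inner_expand lam γ]
  exact Finset.sum_nonneg fun j _ =>
    mul_nonneg ((C.isPos_iff γ).1 hγ j) (C.inner_simple_nonneg_of_dominant h j)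

theorem inner_nonpos_of_dominant_neg {lam γ : V} (h : C.IsDominant lam)
    (hγ : C.IsNeg γ) : ⟪lam, γ⟫_ℝ ≤ 0 := by
  have : (0:ℝ) ≤ ⟪lam, -γ⟫_ℝ := C.inner_nonneg_of_dominant_pos h hγ
  rw [inner_neg_right] at this
  linarith

theorem s_fix_of_inner_zero {lam : V} {i : Fin C.r} (h : ⟪lam, C.π i⟫_ℝ = 0) :
    C.s (C.π i) lam = lam := by
  rw [C.s_apply _ (C.simple_mem i) lam, h]
  norm_num

theorem dominant_orbit {g : V ≃ₗ[ℝ] V} (hg : g ∈ C.W) {lam : V} (hdom : C.IsDominant lam)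
    (hgdom : C.IsDominant (g lam)) : g lam = lam := by
  generalize hn : C.length g = n
  induction n using Nat.strong_induction_on generalizing g with
  | _ n ih =>
    by_cases hone : g = 1
    · rw [hone]; rfl
    · obtain ⟨i, hi⟩ := C.exists_neg_simple hg hone
      have hπ := C.simple_mem i
      have e1 : ⟪g lam, g (C.π i)⟫_ℝ = ⟪lam, C.π i⟫_ℝ := C.inner_invariant g hg lam (C.π i)
      have h2 : ⟪lam, C.π i⟫_ℝ ≤ 0 := by
        rw [← e1]
        exact C.inner_nonpos_of_dominant_neg hgdom hi
      have h3 : 0 ≤ ⟪lam, C.π i⟫_ℝ := C.inner_simple_nonneg_of_dominant hdom i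
      have h0 : ⟪lam, C.π i⟫_ℝ = 0 := le_antisymm h2 h3
      have hfix : C.s (C.π i) lam = lam := C.s_fix_of_inner_zero h0
      have hgs : (g * C.s (C.π i)) lam = g lam := by
        show g (C.s (C.π i) lam) = g lam
        rw [hfix]
      have hlt : C.length (g * C.s (C.π i)) < n := hn ▸ C.length_lt_of_neg hg hi
      have hmem : g * C.s (C.π i) ∈ C.W := mul_mem hg (C.s_mem_W hπ)
      have hgsdom : C.IsDominant ((g * C.s (C.π i)) lam) := by rw [hgs]; exact hgdom
      have := ih (C.length (g * C.s (C.π i))) hlt hmem hgsdom rfl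
      rw [hgs] at this
      exact this

/-- The descent set of `w`. -/
def Dset (w : V ≃ₗ[ℝ] V) : Finset (Fin C.r) :=
  Finset.univ.filter (fun i => C.IsNeg (w⁻¹ (C.π i)))

theorem mem_Dset {w : V ≃ₗ[ℝ] V} {i : Fin C.r} :
    i ∈ C.Dset w ↔ C.IsNeg (w⁻¹ (C.π i)) := by
  unfold Dset; simp

/-- The dominant weight attached to `w`. -/
def lamW (w : V ≃ₗ[ℝ] V) : V := ∑ i ∈ C.Dset w, C.ω i

theorem steinberg_eq (w : V ≃ₗ[ℝ] V) : C.steinberg w = w⁻¹ (C.lamW w) := rfl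

theorem w_steinberg (w : V ≃ₗ[ℝ] V) : w (C.steinberg w) = C.lamW w :=
  apply_inv_apply w _

theorem inner_omega (i j : Fin C.r) :
    ⟪C.ω i, C.π j⟫_ℝ = if i = j then ⟪C.π j, C.π j⟫_ℝ / 2 else 0 := by
  have h := C.fund i j
  have hA : ⟪C.π j, C.π j⟫_ℝ ≠ 0 := (C.inner_self_pos' (C.simple_mem j)).ne'
  by_cases hij : i = j
  · rw [if_pos hij] at h ⊢
    field_simp at h
    linarith
  · rw [if_neg hij] at h ⊢
    have := (div_eq_zero_iff.mp h).resolve_right hA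
    linarith

theorem inner_lamW (w : V ≃ₗ[ℝ] V) (j : Fin C.r) :
    ⟪C.lamW w, C.π j⟫_ℝ = if j ∈ C.Dset w then ⟪C.π j, C.π j⟫_ℝ / 2 else 0 := by
  unfold lamW
  rw [sum_inner]
  have : ∀ i ∈ C.Dset w, ⟪C.ω i, C.π j⟫_ℝ =
      if i = j then ⟪C.π j, C.π j⟫_ℝ / 2 else 0 := fun i _ => C.inner_omega i j
  rw [Finset.sum_congr rfl this, Finset.sum_ite_eq' (C.Dset w) j]

theorem dominant_lamW (w : V ≃ₗ[ℝ] V) : C.IsDominant (C.lamW w) := by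
  intro j
  unfold pairing
  have hA : (0:ℝ) < ⟪C.π j, C.π j⟫_ℝ := C.inner_self_pos' (C.simple_mem j)
  rw [C.inner_lamW w j]
  split
  · positivity
  · simp

theorem isPos_comb (c : Fin C.r → ℝ) (f : Fin C.r → V) (hc : ∀ j, 0 ≤ c j)
    (hf : ∀ j, C.IsPos (f j)) : C.IsPos (∑ j, c j • f j) := by
  rw [isPos_iff]
  intro k
  have hrepr : C.B.repr (∑ j, c j • f j) k = ∑ j, c j * C.B.repr (f j) k := by
    simp only [map_sum, map_smul, Finsupp.coe_finset_sum, Finset.sum_apply,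
      Finsupp.smul_apply, smul_eq_mul]
  rw [hrepr]
  exact Finset.sum_nonneg fun j _ => mul_nonneg (hc j) ((C.isPos_iff (f j)).1 (hf j) k)

end RootSystemData

namespace RootSystemData

variable {V : Type} [NormedAddCommGroup V] [InnerProductSpace ℝ V] [FiniteDimensional ℝ V]
variable (C : RootSystemData V)

theorem main_min {w : V ≃ₗ[ℝ] V} (hw : w ∈ C.W) {u : V ≃ₗ[ℝ] V} (hu : u ∈ C.W)
    (hdom : C.IsDominant (u (C.steinberg w))) :
    C.length w ≤ C.length u ∧ (C.length u = C.length w → u = w) := by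
  set lam := C.lamW w with hlam
  have hldom : C.IsDominant lam := C.dominant_lamW w
  set z := u * w⁻¹ with hzdef
  have hz : z ∈ C.W := mul_mem hu (inv_mem hw)
  have hzw : z * w = u := by rw [hzdef, mul_assoc, inv_mul_cancel, mul_one]
  have hue : u (C.steinberg w) = z lam := by
    rw [C.steinberg_eq w]
    rfl
  have hzdom : C.IsDominant (z lam) := by rw [← hue]; exact hdom
  have hzlam : z lam = lam := C.dominant_orbit hz hldom hzdom
  -- inversion sets
  have hsub : C.invSet w ⊆ C.invSet u := by
    intro α hα
    rw [C.mem_invSet] at hα ⊢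
    obtain ⟨hαΦ, hαpos, hαneg⟩ := hα
    refine ⟨hαΦ, hαpos, ?_⟩
    have hwαΦ : w α ∈ C.Φ := C.root_map hw hαΦ
    have huα : u α = z (w α) := by rw [← hzw]; rfl
    have hγΦ : -(w α) ∈ C.Φ := C.neg_root_mem hwαΦ
    have hγpos : C.IsPos (-(w α)) := hαneg
    -- ⟪lam, -(w α)⟫ > 0
    have hnonneg : 0 ≤ ⟪lam, -(w α)⟫_ℝ := C.inner_nonneg_of_dominant_pos hldom hγpos
    have hlg : 0 < ⟪lam, -(w α)⟫_ℝ := by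
      rcases hnonneg.lt_or_eq with h | h
      · exact h
      · exfalso
        -- coefficients of γ vanish on the descent set
        set γ := -(w α) with hγdef
        have hterm : ∀ j, 0 ≤ C.B.repr γ j * ⟪lam, C.π j⟫_ℝ := fun j =>
          mul_nonneg ((C.isPos_iff γ).1 hγpos j) (C.inner_simple_nonneg_of_dominant hldom j)
        have hsum : ∑ j, C.B.repr γ j * ⟪lam, C.π j⟫_ℝ = 0 := by
          rw [← C.inner_expand lam γ, ← h]
        have hzero : ∀ j ∈ Finset.univ, C.B.repr γ j * ⟪lam, C.π j⟫_ℝ = 0 :=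
          fun j _ => by
            have := (Finset.sum_eq_zero_iff_of_nonneg (fun j _ => hterm j)).1 hsum j
              (Finset.mem_univ j)
            exact this
        have hcD : ∀ j, j ∈ C.Dset w → C.B.repr γ j = 0 := by
          intro j hj
          have hpos : 0 < ⟪lam, C.π j⟫_ℝ := by
            rw [hlam, C.inner_lamW w j, if_pos hj]
            exact half_pos (C.inner_self_pos' (C.simple_mem j))
          have := hzero j (Finset.mem_univ j)
          rcases mul_eq_zero.1 this with h' | h'
          · exact h'
          · exact absurd h' hpos.ne'
        -- w⁻¹ γ = -α is positive: contradiction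
        have hwγ : w⁻¹ γ = -α := by
          rw [hγdef, map_neg, inv_apply_apply]
        have hexp : w⁻¹ γ = ∑ j, C.B.repr γ j • w⁻¹ (C.π j) := by
          have hγexp : γ = ∑ j, C.B.repr γ j • C.π j := by
            simp_rw [← C.B_eq]; exact (C.B.sum_repr γ).symm
          nth_rewrite 1 [hγexp]
          rw [map_sum]
          exact Finset.sum_congr rfl fun j _ => map_smul _ _ _
        set f : Fin C.r → V := fun j => if C.IsNeg (w⁻¹ (C.π j)) then 0 else w⁻¹ (C.π j)
          with hf
        have hexp2 : w⁻¹ γ = ∑ j, C.B.repr γ j • f j := by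
          rw [hexp]
          apply Finset.sum_congr rfl
          intro j _
          by_cases hj : C.IsNeg (w⁻¹ (C.π j))
          · have hj' : j ∈ C.Dset w := C.mem_Dset.2 hj
            rw [hcD j hj', zero_smul, zero_smul]
          · rw [hf]; simp only [if_neg hj]
        have hfpos : ∀ j, C.IsPos (f j) := by
          intro j
          rw [hf]
          by_cases hj : C.IsNeg (w⁻¹ (C.π j))
          · simp only [if_pos hj]; exact C.isPos_zero
          · simp only [if_neg hj]
            have : w⁻¹ (C.π j) ∈ C.Φ := C.root_map (inv_mem hw) (C.simple_mem j)
            exact (C.isPos_or_isNeg this).resolve_right hj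
        have hwγpos : C.IsPos (w⁻¹ γ) := by
          rw [hexp2]
          exact C.isPos_comb _ _ (fun j => (C.isPos_iff γ).1 hγpos j) hfpos
        rw [hwγ] at hwγpos
        exact C.not_isNeg_of_pos hαΦ hαpos hwγpos
    -- transport by z
    have hzγΦ : z (-(w α)) ∈ C.Φ := C.root_map hz (C.neg_root_mem hwαΦ)
    have hinner : ⟪lam, z (-(w α))⟫_ℝ = ⟪lam, -(w α)⟫_ℝ := by
      conv_lhs => rw [← hzlam]
      exact C.inner_invariant z hz lam _
    have hzγpos : C.IsPos (z (-(w α))) := by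
      rcases C.isPos_or_isNeg hzγΦ with h' | h'
      · exact h'
      · exfalso
        have := C.inner_nonpos_of_dominant_neg hldom h'
        rw [hinner] at this
        linarith
    show C.IsPos (-(u α))
    have : -(u α) = z (-(w α)) := by rw [huα, map_neg]
    rw [this]
    exact hzγpos
  have hcard : (C.invSet w).card ≤ (C.invSet u).card := Finset.card_le_card hsub
  have hlen_w := C.length_eq_card_invSet hw
  have hlen_u := C.length_eq_card_invSet hu
  constructor
  · omega
  · intro hlen
    have heq : C.invSet u = C.invSet w :=
      (Finset.eq_of_subset_of_card_le hsub (by omega)).symm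
    by_contra hne
    have hzne : z ≠ 1 := by
      intro h1
      rw [h1, one_mul] at hzw
      exact hne hzw.symm
    obtain ⟨i, hi⟩ := C.exists_neg_simple hz hzne
    have hπ := C.simple_mem i
    have hzπΦ : z (C.π i) ∈ C.Φ := C.root_map hz hπ
    have h0 : ⟪lam, C.π i⟫_ℝ = 0 := by
      have hinner0 : ⟪lam, z (C.π i)⟫_ℝ = ⟪lam, C.π i⟫_ℝ := by
        conv_lhs => rw [← hzlam]
        exact C.inner_invariant z hz lam _
      have h1 : ⟪lam, z (C.π i)⟫_ℝ ≤ 0 := C.inner_nonpos_of_dominant_neg hldom hi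
      have h2 : 0 ≤ ⟪lam, C.π i⟫_ℝ := C.inner_simple_nonneg_of_dominant hldom i
      linarith [hinner0 ▸ h1]
    have hiD : i ∉ C.Dset w := by
      intro hiD
      have : 0 < ⟪lam, C.π i⟫_ℝ := by
        rw [hlam, C.inner_lamW w i, if_pos hiD]
        exact half_pos (C.inner_self_pos' hπ)
      linarith
    have hβΦ : w⁻¹ (C.π i) ∈ C.Φ := C.root_map (inv_mem hw) hπ
    have hβpos : C.IsPos (w⁻¹ (C.π i)) := by
      have hnotneg : ¬ C.IsNeg (w⁻¹ (C.π i)) := fun h' => hiD (C.mem_Dset.2 h')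
      exact (C.isPos_or_isNeg hβΦ).resolve_right hnotneg
    have huβ : u (w⁻¹ (C.π i)) = z (C.π i) := by
      rw [← hzw]
      show z (w (w⁻¹ (C.π i))) = z (C.π i)
      rw [apply_inv_apply w (C.π i)]
    have hβinv : w⁻¹ (C.π i) ∈ C.invSet u := by
      rw [C.mem_invSet]
      refine ⟨hβΦ, hβpos, ?_⟩
      rw [huβ]
      exact hi
    rw [heq, C.mem_invSet] at hβinv
    have hfin : C.IsNeg (C.π i) := by
      have h' := hβinv.2.2
      rwa [apply_inv_apply w (C.π i)] at h'
    exact C.not_isNeg_of_pos hπ (C.isPos_simple i) hfin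

end RootSystemData

/-- For every `w ∈ W`, `w` is the unique element of minimal length in
`{u ∈ W : u ⬝ e_w is dominant}`.  In particular `v ↦ e_v` is injective on `W`. -/
theorem statement_9
    {V : Type} [NormedAddCommGroup V] [InnerProductSpace ℝ V] [FiniteDimensional ℝ V]
    (C : RootSystemData V) :
    (∀ w ∈ C.W,
      C.IsDominant (w (C.steinberg w)) ∧
      ∀ u ∈ C.W, C.IsDominant (u (C.steinberg w)) →
        C.length w ≤ C.length u ∧ (C.length u = C.length w → u = w)) ∧
    (∀ v ∈ C.W, ∀ w ∈ C.W, C.steinberg v = C.steinberg w → v = w) := by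
  constructor
  · intro w hw
    constructor
    · rw [C.w_steinberg w]
      exact C.dominant_lamW w
    · intro u hu hdom
      exact C.main_min hw hu hdom
  · intro v hv w hw h
    have hdv : C.IsDominant (v (C.steinberg v)) := by
      rw [C.w_steinberg v]; exact C.dominant_lamW v
    have hdw : C.IsDominant (w (C.steinberg w)) := by
      rw [C.w_steinberg w]; exact C.dominant_lamW w
    have h1 : C.IsDominant (v (C.steinberg w)) := by rw [← h]; exact hdv
    have h2 : C.IsDominant (w (C.steinberg v)) := by rw [h]; exact hdw
    have hm1 := C.main_min hw hv h1
    have hm2 := C.main_min hv hw h2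
    have : C.length v = C.length w := le_antisymm hm2.1 hm1.1
    exact (hm2.2 this.symm).symm
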